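/- For every positive integer ℓ and every s₀ ≥ 0 there exists a unique function f : [0,∞) → ℝ with f(0) = s₀ and f'(t) = D(s_in − f(t)) − k μ(f(t)) ℓ for all t ≥ 0; moreover this solution satisfies 0 ≤ f(t) ≤ max(s₀, s_in) for all t ≥ 0. -/

import Mathlib

open Set
open scoped NNReal

/-- One-sided invariance: if the vector field is nonpositive above `M`, a solution starting
below `M` stays below `M`. -/
lemma inv_upper {V : ℝ → ℝ} {M b : ℝ}
    (hup : ∀ s, M ≤ s → V s ≤ 0)
    {f : ℝ → ℝ} (hf : ContinuousOn f (Set.Icc 0 b))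
    (hf' : ∀ t ∈ Set.Ioo 0 b, HasDerivAt f (V (f t)) t)
    (h0 : f 0 ≤ M) : ∀ t ∈ Set.Icc 0 b, f t ≤ M := by
  intro t ht
  by_contra hlt
  push_neg at hlt
  set S : Set ℝ := {u ∈ Set.Icc 0 t | f u ≤ M} with hS
  have hsub : S ⊆ Set.Icc 0 t := fun u hu => hu.1
  have htb : t ≤ b := ht.2
  have hIcc : Set.Icc (0:ℝ) t ⊆ Set.Icc 0 b := Set.Icc_subset_Icc le_rfl htb
  have hfc : ContinuousOn f (Set.Icc 0 t) := hf.mono hIcc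
  have hSclosed : IsClosed S := by
    have h := hfc.preimage_isClosed_of_isClosed isClosed_Icc (isClosed_Iic (a := M))
    have : S = Set.Icc 0 t ∩ f ⁻¹' Set.Iic M := by
      ext u; simp [hS, Set.mem_sep_iff, and_comm]
    rwa [this]
  have hScompact : IsCompact S := isCompact_Icc.of_isClosed_subset hSclosed hsub
  have hS0 : (0:ℝ) ∈ S := ⟨⟨le_rfl, ht.1⟩, h0⟩
  have hSne : S.Nonempty := ⟨0, hS0⟩
  set t₁ := sSup S with ht₁def
  have ht₁S : t₁ ∈ S := hScompact.sSup_mem hSne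
  have ht₁t : t₁ ≤ t := (hsub ht₁S).2
  have ht₁0 : 0 ≤ t₁ := (hsub ht₁S).1
  have hne : t₁ ≠ t := fun h => absurd (h ▸ ht₁S.2) (not_le.mpr hlt)
  have ht₁lt : t₁ < t := lt_of_le_of_ne ht₁t hne
  have hgt : ∀ u ∈ Set.Ioc t₁ t, M < f u := by
    intro u hu
    by_contra hle; push_neg at hle
    have huS : u ∈ S := ⟨⟨ht₁0.trans hu.1.le, hu.2⟩, hle⟩
    exact absurd (le_csSup hScompact.bddAbove huS) (not_le.mpr hu.1)
  have hanti : AntitoneOn f (Set.Icc t₁ t) := by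
    apply antitoneOn_of_deriv_nonpos (convex_Icc _ _) (hf.mono (Set.Icc_subset_Icc ht₁0 htb))
    · intro u hu
      rw [interior_Icc] at hu
      have hu' : u ∈ Set.Ioo 0 b := ⟨lt_of_le_of_lt ht₁0 hu.1, lt_of_lt_of_le hu.2 htb⟩
      exact ((hf' u hu').differentiableAt).differentiableWithinAt
    · intro u hu
      rw [interior_Icc] at hu
      have hu' : u ∈ Set.Ioo 0 b := ⟨lt_of_le_of_lt ht₁0 hu.1, lt_of_lt_of_le hu.2 htb⟩
      rw [(hf' u hu').deriv]
      exact hup _ (hgt u ⟨hu.1, hu.2.le⟩).le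
  have hft : f t ≤ f t₁ :=
    hanti (Set.left_mem_Icc.mpr ht₁lt.le) (Set.right_mem_Icc.mpr ht₁lt.le) ht₁lt.le
  exact absurd (hft.trans ht₁S.2) (not_le.mpr hlt)

/-- Two-sided invariance of `[0, M]`. -/
lemma inv_aux {V : ℝ → ℝ} {M b : ℝ}
    (hup : ∀ s, M ≤ s → V s ≤ 0) (hlo : ∀ s, s ≤ 0 → 0 ≤ V s)
    {f : ℝ → ℝ} (hf : ContinuousOn f (Set.Icc 0 b))
    (hf' : ∀ t ∈ Set.Ioo 0 b, HasDerivAt f (V (f t)) t)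
    (h0 : f 0 ∈ Set.Icc 0 M) :
    ∀ t ∈ Set.Icc 0 b, f t ∈ Set.Icc 0 M := by
  intro t ht
  refine ⟨?_, inv_upper hup hf hf' h0.2 t ht⟩
  have hlow : ∀ u ∈ Set.Icc 0 b, -f u ≤ 0 := by
    refine inv_upper (V := fun s => -(V (-s))) (M := 0) ?_ hf.neg ?_ ?_
    · intro s hs
      simp only [neg_nonpos]
      exact hlo _ (by linarith)
    · intro u hu
      have := (hf' u hu).neg
      simp only [neg_neg]
      exact this
    · simpa using h0.1
  have := hlow t ht
  linarith

/-- Existence of a solution on `[0, T]` staying in `[0, M]`, given a field Lipschitz on `[0, M]`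
pointing inward at the boundary. -/
lemma aux_exist {F : ℝ → ℝ} {M : ℝ} (hM : 0 ≤ M) {K : ℝ≥0}
    (hFlip : LipschitzOnWith K F (Set.Icc 0 M))
    (hup : ∀ s, M ≤ s → F s ≤ 0) (hlo : ∀ s, s ≤ 0 → 0 ≤ F s)
    {s₀ : ℝ} (hs₀ : s₀ ∈ Set.Icc 0 M) {T : ℝ} (hT : 0 ≤ T) :
    ∃ f : ℝ → ℝ, f 0 = s₀ ∧ (∀ t ∈ Set.Icc 0 T, HasDerivWithinAt f (F (f t)) (Set.Icc 0 T) t) ∧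
      ∀ t ∈ Set.Icc 0 T, f t ∈ Set.Icc 0 M := by
  set c : ℝ → ℝ := fun x => max 0 (min x M) with hc
  have hcmem : ∀ x, c x ∈ Set.Icc 0 M := fun x => ⟨le_max_left _ _, max_le hM (min_le_right _ _)⟩
  have hcid : ∀ x ∈ Set.Icc 0 M, c x = x := fun x hx => by
    simp only [hc]; rw [min_eq_left hx.2, max_eq_right hx.1]
  have hclip : ∀ x y : ℝ, dist (c x) (c y) ≤ dist x y := by
    intro x y
    simp only [hc, Real.dist_eq]
    calc |max 0 (min x M) - max 0 (min y M)| ≤ |min x M - min y M| := by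
          rw [max_comm 0 (min x M), max_comm 0 (min y M)]
          exact abs_max_sub_max_le_abs _ _ _
      _ ≤ max |x - y| |M - M| := abs_min_sub_min_le_max _ _ _ _
      _ = |x - y| := by simp
  have hFtlip : LipschitzWith K (fun x => F (c x)) := by
    apply LipschitzWith.of_dist_le_mul
    intro x y
    exact (hFlip.dist_le_mul _ (hcmem x) _ (hcmem y)).trans
      (mul_le_mul_of_nonneg_left (hclip x y) K.coe_nonneg)
  have hbd : ∀ x : ℝ, ‖F (c x)‖ ≤ |F 0| + K * M := by
    intro x
    have h := hFlip.dist_le_mul (c x) (hcmem x) 0 ⟨le_rfl, hM⟩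
    rw [Real.dist_eq, Real.dist_eq, sub_zero] at h
    have hcx : |c x| ≤ M := by
      rw [abs_of_nonneg (hcmem x).1]; exact (hcmem x).2
    have h1 : |F (c x)| ≤ |F (c x) - F 0| + |F 0| := by
      calc |F (c x)| = |(F (c x) - F 0) + F 0| := by ring_nf
        _ ≤ |F (c x) - F 0| + |F 0| := abs_add_le _ _
    have h2 : (K : ℝ) * |c x| ≤ K * M := mul_le_mul_of_nonneg_left hcx K.coe_nonneg
    calc ‖F (c x)‖ = |F (c x)| := rfl
      _ ≤ |F (c x) - F 0| + |F 0| := h1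
      _ ≤ K * M + |F 0| := by linarith
      _ = |F 0| + K * M := by ring
  have hC₀ : (0:ℝ) ≤ |F 0| + K * M :=
    add_nonneg (abs_nonneg _) (mul_nonneg K.coe_nonneg hM)
  have hPL : IsPicardLindelof (fun _ x => F (c x)) (tmin := 0) (tmax := T) ⟨0, le_rfl, hT⟩ s₀
      ⟨(|F 0| + K * M) * T, mul_nonneg hC₀ hT⟩ 0 ⟨|F 0| + K * M, hC₀⟩ K :=
    { lipschitzOnWith := fun _ _ => hFtlip.lipschitzOnWith
      continuousOn := fun _ _ => continuousOn_const
      norm_le := fun _ _ x _ => hbd x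
      mul_max_le := by
        show (|F 0| + K * M) * max (T - 0) (0 - 0) ≤ (|F 0| + K * M) * T - 0
        rw [sub_zero, sub_self, max_eq_left hT, sub_zero] }
  obtain ⟨f, hf0 : f 0 = s₀, hf'⟩ := hPL.exists_eq_forall_mem_Icc_hasDerivWithinAt₀
  have hfc : ContinuousOn f (Set.Icc 0 T) := fun u hu => (hf' u hu).continuousWithinAt
  have hfd : ∀ t ∈ Set.Ioo 0 T, HasDerivAt f (F (c (f t))) t := fun t ht =>
    (hf' t (Set.Ioo_subset_Icc_self ht)).hasDerivAt (Icc_mem_nhds ht.1 ht.2)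
  have hup' : ∀ s, M ≤ s → F (c s) ≤ 0 := by
    intro s hs
    have : c s = M := by simp only [hc]; rw [min_eq_right hs, max_eq_right hM]
    rw [this]; exact hup M le_rfl
  have hlo' : ∀ s, s ≤ 0 → 0 ≤ F (c s) := by
    intro s hs
    have : c s = 0 := by simp only [hc]; rw [min_eq_left (hs.trans hM), max_eq_left hs]
    rw [this]; exact hlo 0 le_rfl
  have hmem : ∀ t ∈ Set.Icc 0 T, f t ∈ Set.Icc 0 M := by
    apply inv_aux hup' hlo' hfc hfd
    rw [hf0]; exact hs₀
  refine ⟨f, hf0, ?_, hmem⟩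
  intro t ht
  have h := hf' t ht
  rwa [hcid (f t) (hmem t ht)] at h

/-- For every positive integer ℓ and every s₀ ≥ 0, the substrate ODE
s' = D(s_in − s) − k μ(s) ℓ with s(0) = s₀ has a unique solution on [0,∞), and this
solution satisfies 0 ≤ f(t) ≤ max(s₀, s_in) for all t ≥ 0. -/
theorem stmt_2
    (D sIn k : ℝ) (μ : ℝ → ℝ)
    (hD : 0 < D) (hsIn : 0 < sIn) (hk : 0 < k)
    (hμC1 : ContDiffOn ℝ 1 μ (Set.Ici 0))
    (hμmono : StrictMonoOn μ (Set.Ici 0))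
    (hμ0 : μ 0 = 0)
    (hμpos : ∀ s : ℝ, 0 < s → 0 < μ s)
    (hμext : ∀ s : ℝ, s ≤ 0 → μ s = 0) :
    ∀ ℓ : ℕ, 1 ≤ ℓ → ∀ s₀ : ℝ, 0 ≤ s₀ →
      ∃ f : ℝ → ℝ,
        (f 0 = s₀ ∧
          (∀ t : ℝ, 0 ≤ t →
            HasDerivWithinAt f (D * (sIn - f t) - k * μ (f t) * (ℓ : ℝ)) (Set.Ici 0) t) ∧
          (∀ t : ℝ, 0 ≤ t → 0 ≤ f t ∧ f t ≤ max s₀ sIn)) ∧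
        ∀ g : ℝ → ℝ, g 0 = s₀ →
          (∀ t : ℝ, 0 ≤ t →
            HasDerivWithinAt g (D * (sIn - g t) - k * μ (g t) * (ℓ : ℝ)) (Set.Ici 0) t) →
          Set.EqOn g f (Set.Ici 0) := by
  intro ℓ hℓ s₀ hs₀
  have hℓR : (1:ℝ) ≤ (ℓ:ℝ) := by exact_mod_cast hℓ
  have hℓpos : (0:ℝ) < (ℓ:ℝ) := lt_of_lt_of_le one_pos hℓR
  set M : ℝ := max s₀ sIn with hMdef
  have hM : 0 < M := lt_of_lt_of_le hsIn (le_max_right _ _)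
  have hsInM : sIn ≤ M := le_max_right _ _
  have hs₀M : s₀ ∈ Set.Icc 0 M := ⟨hs₀, le_max_left _ _⟩
  set F : ℝ → ℝ := fun x => D * (sIn - x) - k * μ x * (ℓ:ℝ) with hF
  -- μ is nonnegative everywhere
  have hμnonneg : ∀ s : ℝ, 0 ≤ μ s := by
    intro s
    rcases le_or_gt s 0 with h | h
    · rw [hμext s h]
    · exact (hμpos s h).le
  -- sign conditions
  have hup : ∀ s, M ≤ s → F s ≤ 0 := by
    intro s hs
    have h1 : D * (sIn - s) ≤ 0 :=
      mul_nonpos_of_nonneg_of_nonpos hD.le (by linarith)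
    have h2 : 0 ≤ k * μ s * (ℓ:ℝ) :=
      mul_nonneg (mul_nonneg hk.le (hμnonneg s)) hℓpos.le
    simp only [hF]; linarith
  have hlo : ∀ s, s ≤ 0 → 0 ≤ F s := by
    intro s hs
    simp only [hF, hμext s hs]
    have : 0 ≤ D * (sIn - s) := mul_nonneg hD.le (by linarith)
    linarith
  -- Lipschitz constant for μ on [0, M]
  have hμc1' : ContDiffOn ℝ 1 μ (Set.Icc 0 M) := hμC1.mono Set.Icc_subset_Ici_self
  have hud : UniqueDiffOn ℝ (Set.Icc (0:ℝ) M) := uniqueDiffOn_Icc hM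
  have hdiff : DifferentiableOn ℝ μ (Set.Icc 0 M) := hμc1'.differentiableOn one_ne_zero
  have hcderiv : ContinuousOn (derivWithin μ (Set.Icc 0 M)) (Set.Icc 0 M) :=
    hμc1'.continuousOn_derivWithin hud le_rfl
  obtain ⟨L0, hL0⟩ := isCompact_Icc.exists_bound_of_continuousOn hcderiv
  set Lr : ℝ := max L0 0 with hLrdef
  have hLr0 : 0 ≤ Lr := le_max_right _ _
  have hμLip : LipschitzOnWith Lr.toNNReal μ (Set.Icc 0 M) := by
    apply (convex_Icc _ _).lipschitzOnWith_of_nnnorm_derivWithin_le hdiff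
    intro x hx
    rw [← NNReal.coe_le_coe, coe_nnnorm, Real.coe_toNNReal']
    rw [max_comm]
    exact le_max_of_le_right ((hL0 x hx).trans (le_max_left _ _))
  set Kr : ℝ := D + k * (ℓ:ℝ) * Lr with hKrdef
  have hKr0 : 0 ≤ Kr := by positivity
  set K : ℝ≥0 := Kr.toNNReal with hKdef
  have hKcoe : (K : ℝ) = Kr := Real.coe_toNNReal _ hKr0
  have hFlip : LipschitzOnWith K F (Set.Icc 0 M) := by
    rw [lipschitzOnWith_iff_dist_le_mul]
    intro x hx y hy
    rw [Real.dist_eq, Real.dist_eq, hKcoe]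
    have h1 : |μ x - μ y| ≤ Lr * |x - y| := by
      have h := hμLip.dist_le_mul x hx y hy
      rwa [Real.dist_eq, Real.dist_eq, Real.coe_toNNReal _ hLr0] at h
    have h2 : F x - F y = D * (y - x) - (k * (ℓ:ℝ)) * (μ x - μ y) := by
      simp only [hF]; ring
    calc |F x - F y| = |D * (y - x) - (k * (ℓ:ℝ)) * (μ x - μ y)| := by rw [h2]
      _ ≤ |D * (y - x)| + |(k * (ℓ:ℝ)) * (μ x - μ y)| := abs_sub _ _
      _ = D * |y - x| + (k * (ℓ:ℝ)) * |μ x - μ y| := by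
          rw [abs_mul, abs_mul, abs_of_pos hD, abs_of_pos (mul_pos hk hℓpos)]
      _ ≤ D * |x - y| + (k * (ℓ:ℝ)) * (Lr * |x - y|) := by
          rw [abs_sub_comm y x]
          have := mul_le_mul_of_nonneg_left h1 (mul_pos hk hℓpos).le
          linarith
      _ = Kr * |x - y| := by rw [hKrdef]; ring
  -- solutions on [0, n+1] for each n
  have key : ∀ n : ℕ, ∃ f : ℝ → ℝ, f 0 = s₀ ∧
      (∀ t ∈ Set.Icc 0 ((n:ℝ)+1), HasDerivWithinAt f (F (f t)) (Set.Icc 0 ((n:ℝ)+1)) t) ∧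
      ∀ t ∈ Set.Icc 0 ((n:ℝ)+1), f t ∈ Set.Icc 0 M := by
    intro n
    exact aux_exist hM.le hFlip hup hlo hs₀M (by positivity)
  choose fn hfn0 hfn' hfnmem using key
  -- derivative within `Ici t` for solutions on `[0, n+1]`
  have hderIci : ∀ (n : ℕ) (t : ℝ), t ∈ Set.Ico 0 ((n:ℝ)+1) →
      HasDerivWithinAt (fn n) (F (fn n t)) (Set.Ici t) t := by
    intro n t ht
    have h := hfn' n t ⟨ht.1, ht.2.le⟩
    have hsub : Set.Ici t ∩ Set.Iic ((n:ℝ)+1) ⊆ Set.Icc 0 ((n:ℝ)+1) := by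
      intro u hu; exact ⟨ht.1.trans hu.1, hu.2⟩
    have hmem : Set.Ici t ∩ Set.Iic ((n:ℝ)+1) ∈ nhdsWithin t (Set.Ici t) :=
      Filter.inter_mem self_mem_nhdsWithin
        (mem_nhdsWithin_of_mem_nhds (Iic_mem_nhds ht.2))
    exact (h.mono hsub).mono_of_mem_nhdsWithin hmem
  have hcontIcc : ∀ (n : ℕ), ContinuousOn (fn n) (Set.Icc 0 ((n:ℝ)+1)) := fun n u hu =>
    (hfn' n u hu).continuousWithinAt
  -- uniqueness on intervals (for arbitrary pair of solutions staying in [0,M])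
  have huniq : ∀ (b : ℝ) (p q : ℝ → ℝ),
      ContinuousOn p (Set.Icc 0 b) →
      (∀ t ∈ Set.Ico 0 b, HasDerivWithinAt p (F (p t)) (Set.Ici t) t) →
      (∀ t ∈ Set.Ico 0 b, p t ∈ Set.Icc 0 M) →
      ContinuousOn q (Set.Icc 0 b) →
      (∀ t ∈ Set.Ico 0 b, HasDerivWithinAt q (F (q t)) (Set.Ici t) t) →
      (∀ t ∈ Set.Ico 0 b, q t ∈ Set.Icc 0 M) →
      p 0 = q 0 → Set.EqOn p q (Set.Icc 0 b) := by
    intro b p q hp hp' hps hq hq' hqs h0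
    exact ODE_solution_unique_of_mem_Icc_right
      (v := fun _ x => F x) (s := fun _ => Set.Icc 0 M)
      (fun _ _ => hFlip) hp hp' hps hq hq' hqs h0
  -- consistency of the fn family
  have hconsist : ∀ m n : ℕ, ∀ t : ℝ, 0 ≤ t → t ≤ (m:ℝ)+1 → t ≤ (n:ℝ)+1 →
      fn m t = fn n t := by
    intro m n t ht0 htm htn
    set b : ℝ := min ((m:ℝ)+1) ((n:ℝ)+1) with hbdef
    have hbm : b ≤ (m:ℝ)+1 := min_le_left _ _
    have hbn : b ≤ (n:ℝ)+1 := min_le_right _ _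
    have htb : t ≤ b := le_min htm htn
    have hIm : Set.Icc (0:ℝ) b ⊆ Set.Icc 0 ((m:ℝ)+1) := Set.Icc_subset_Icc le_rfl hbm
    have hIn : Set.Icc (0:ℝ) b ⊆ Set.Icc 0 ((n:ℝ)+1) := Set.Icc_subset_Icc le_rfl hbn
    have := huniq b (fn m) (fn n)
      ((hcontIcc m).mono hIm)
      (fun u hu => hderIci m u ⟨hu.1, lt_of_lt_of_le hu.2 hbm⟩)
      (fun u hu => hfnmem m u (hIm ⟨hu.1, hu.2.le⟩))
      ((hcontIcc n).mono hIn)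
      (fun u hu => hderIci n u ⟨hu.1, lt_of_lt_of_le hu.2 hbn⟩)
      (fun u hu => hfnmem n u (hIn ⟨hu.1, hu.2.le⟩))
      (by rw [hfn0 m, hfn0 n])
    exact this ⟨ht0, htb⟩
  -- the global solution
  set f : ℝ → ℝ := fun t => fn ⌈t⌉₊ t with hfdef
  have hagree : ∀ (n : ℕ) (t : ℝ), 0 ≤ t → t ≤ (n:ℝ)+1 → f t = fn n t := by
    intro n t ht0 htn
    apply hconsist ⌈t⌉₊ n t ht0 _ htn
    exact (Nat.le_ceil t).trans (by linarith [Nat.le_ceil t])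
  have hf0 : f 0 = s₀ := by
    have : f 0 = fn 0 0 := hagree 0 0 le_rfl (by norm_num)
    rw [this, hfn0]
  -- derivative of f within Ici 0
  have hder : ∀ t : ℝ, 0 ≤ t →
      HasDerivWithinAt f (D * (sIn - f t) - k * μ (f t) * (ℓ:ℝ)) (Set.Ici 0) t := by
    intro t ht
    set n : ℕ := ⌈t⌉₊ with hn
    have htn : t < (n:ℝ) + 1 := by
      have := Nat.le_ceil t; linarith
    have h1 : HasDerivWithinAt (fn n) (F (fn n t)) (Set.Icc 0 ((n:ℝ)+1)) t :=
      hfn' n t ⟨ht, htn.le⟩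
    have hmemI : Set.Icc (0:ℝ) ((n:ℝ)+1) ∈ nhdsWithin t (Set.Ici 0) := by
      have : Set.Icc (0:ℝ) ((n:ℝ)+1) = Set.Ici (0:ℝ) ∩ Set.Iic ((n:ℝ)+1) :=
        (Set.Ici_inter_Iic).symm
      rw [this]
      exact Filter.inter_mem self_mem_nhdsWithin
        (mem_nhdsWithin_of_mem_nhds (Iic_mem_nhds htn))
    have h2 : HasDerivWithinAt (fn n) (F (fn n t)) (Set.Ici 0) t :=
      h1.mono_of_mem_nhdsWithin hmemI
    have heq : f =ᶠ[nhdsWithin t (Set.Ici 0)] fn n := by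
      filter_upwards [hmemI] with u hu
      exact hagree n u hu.1 hu.2
    have h3 : HasDerivWithinAt f (F (fn n t)) (Set.Ici 0) t :=
      h2.congr_of_eventuallyEq heq (hagree n t ht htn.le)
    have hft : f t = fn n t := hagree n t ht htn.le
    rw [← hft] at h3
    exact h3
  -- bounds
  have hbound : ∀ t : ℝ, 0 ≤ t → 0 ≤ f t ∧ f t ≤ max s₀ sIn := by
    intro t ht
    set n : ℕ := ⌈t⌉₊ with hn
    have htn : t ≤ (n:ℝ) + 1 := by
      have := Nat.le_ceil t; linarith
    have := hfnmem n t ⟨ht, htn⟩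
    rw [← hagree n t ht htn] at this
    exact ⟨this.1, this.2⟩
  refine ⟨f, ⟨hf0, hder, hbound⟩, ?_⟩
  -- uniqueness
  intro g hg0 hg'
  intro t ht
  simp only [Set.mem_Ici] at ht
  -- invariance for g on [0, t]
  have hgc : ContinuousOn g (Set.Icc 0 t) := by
    intro u hu
    exact ((hg' u hu.1).continuousWithinAt).mono (Set.Icc_subset_Ici_self)
  have hgd : ∀ u ∈ Set.Ioo (0:ℝ) t, HasDerivAt g (F (g u)) u := by
    intro u hu
    exact (hg' u hu.1.le).hasDerivAt (Ici_mem_nhds hu.1)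
  have hgmem : ∀ u ∈ Set.Icc (0:ℝ) t, g u ∈ Set.Icc 0 M :=
    inv_aux hup hlo hgc hgd (by rw [hg0]; exact hs₀M)
  have hfc : ContinuousOn f (Set.Icc 0 t) := by
    intro u hu
    exact ((hder u hu.1).continuousWithinAt).mono (Set.Icc_subset_Ici_self)
  have heq := huniq t g f hgc
    (fun u hu => (hg' u hu.1).mono (Set.Ici_subset_Ici.mpr hu.1))
    (fun u hu => hgmem u ⟨hu.1, hu.2.le⟩)
    hfc
    (fun u hu => (hder u hu.1).mono (Set.Ici_subset_Ici.mpr hu.1))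
    (fun u hu => (fun h => ⟨h.1, h.2⟩) (hbound u hu.1))
    (by rw [hg0, hf0])
  exact heq ⟨ht, le_rfl⟩
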